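/- Let a, b be self-adjoint elements of a unital C*-algebra A. Then a ⊥_B^v b if and only if v(a + rb) ≥ v(a) for all real r. -/

import Mathlib

open scoped ComplexOrder

/-- A state on a unital C*-algebra: a positive linear functional with `φ 1 = 1` and norm 1. -/
def IsState (A : Type*) [CStarAlgebra A] (φ : A →L[ℂ] ℂ) : Prop :=
  (∀ a : A, 0 ≤ φ (star a * a)) ∧ φ 1 = 1 ∧ ‖φ‖ = 1

/-- The numerical radius `v(a) = sup {|φ(a)| : φ a state}`. -/
noncomputable def nr {A : Type*} [CStarAlgebra A] (a : A) : ℝ :=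
  sSup {r : ℝ | ∃ φ : A →L[ℂ] ℂ, IsState A φ ∧ r = ‖φ a‖}

/-- The numerical radius Crawford number `C(b) = inf {|φ(b)| : φ a state}`. -/
noncomputable def crawford {A : Type*} [CStarAlgebra A] (b : A) : ℝ :=
  sInf {r : ℝ | ∃ φ : A →L[ℂ] ℂ, IsState A φ ∧ r = ‖φ b‖}

/-- Numerical radius Birkhoff--James orthogonality: `v(a + λ b) ≥ v(a)` for all `λ ∈ ℂ`. -/
def nrOrth {A : Type*} [CStarAlgebra A] (a b : A) : Prop :=
  ∀ lam : ℂ, nr a ≤ nr (a + lam • b)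

/-- Birkhoff--James orthogonality: `‖a + λ b‖ ≥ ‖a‖` for all `λ ∈ ℂ`. -/
def bjOrth {A : Type*} [CStarAlgebra A] (a b : A) : Prop :=
  ∀ lam : ℂ, ‖a‖ ≤ ‖a + lam • b‖

variable {A : Type*} [CStarAlgebra A]

lemma state_im_zero {φ : A →L[ℂ] ℂ} (hφ : IsState A φ) {c : A} (hc : IsSelfAdjoint c) :
    (φ c).im = 0 := by
  obtain ⟨hpos, h1, -⟩ := hφ
  have h2 : (φ (star c * c)).im = 0 := ((Complex.le_def.mp (hpos c)).2).symm
  have h3 : (φ (star (1 + c) * (1 + c))).im = 0 := ((Complex.le_def.mp (hpos (1 + c))).2).symm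
  rw [hc.star_eq] at h2
  have hexp : star (1 + c) * (1 + c) = 1 + c + c + c * c := by
    rw [star_add, star_one, hc.star_eq]; noncomm_ring
  rw [hexp] at h3
  simp only [map_add, Complex.add_im, h1] at h3
  simp only [h2] at h3
  norm_num at h3
  linarith

lemma nr_bddAbove (x : A) :
    BddAbove {r : ℝ | ∃ φ : A →L[ℂ] ℂ, IsState A φ ∧ r = ‖φ x‖} := by
  refine ⟨‖x‖, fun r hr => ?_⟩
  obtain ⟨φ, ⟨-, -, hn⟩, rfl⟩ := hr
  calc ‖φ x‖ = ‖φ x‖ := rfl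
    _ ≤ ‖φ‖ * ‖x‖ := φ.le_opNorm x
    _ = ‖x‖ := by rw [hn, one_mul]

lemma key_abs {φ : A →L[ℂ] ℂ} (hφ : IsState A φ) {a b : A} (ha : IsSelfAdjoint a)
    (hb : IsSelfAdjoint b) (lam : ℂ) :
    ‖φ (a + (lam.re : ℂ) • b)‖ ≤ ‖φ (a + lam • b)‖ := by
  have hai : (φ a).im = 0 := state_im_zero hφ ha
  have hbi : (φ b).im = 0 := state_im_zero hφ hb
  have e1 : φ (a + (lam.re : ℂ) • b) = φ a + (lam.re : ℂ) * φ b := by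
    simp [map_add, map_smul, smul_eq_mul]
  have e2 : φ (a + lam • b) = φ a + lam * φ b := by
    simp [map_add, map_smul, smul_eq_mul]
  have him : (φ a + (lam.re : ℂ) * φ b).im = 0 := by
    simp [Complex.add_im, Complex.mul_im, hai, hbi]
  have hre : (φ a + (lam.re : ℂ) * φ b).re = (φ a + lam * φ b).re := by
    simp [Complex.add_re, Complex.mul_re, hbi]
  rw [e1, e2]
  calc ‖φ a + (lam.re : ℂ) * φ b‖
      = |(φ a + (lam.re : ℂ) * φ b).re| := by
        rw [Complex.norm_def, Complex.normSq_apply, him]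
        rw [mul_zero, add_zero]
        exact Real.sqrt_mul_self_eq_abs _
    _ = |(φ a + lam * φ b).re| := by rw [hre]
    _ ≤ ‖φ a + lam * φ b‖ := Complex.abs_re_le_norm _

lemma nr_re_le {a b : A} (ha : IsSelfAdjoint a) (hb : IsSelfAdjoint b) (lam : ℂ) :
    nr (a + (lam.re : ℂ) • b) ≤ nr (a + lam • b) := by
  by_cases hstate : ∃ φ : A →L[ℂ] ℂ, IsState A φ
  · obtain ⟨φ₀, hφ₀⟩ := hstate
    have hne : (‖φ₀ (a + (lam.re : ℂ) • b)‖) ∈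
        {r : ℝ | ∃ φ : A →L[ℂ] ℂ, IsState A φ ∧ r = ‖φ (a + (lam.re : ℂ) • b)‖} :=
      ⟨φ₀, hφ₀, rfl⟩
    apply csSup_le ⟨_, hne⟩
    rintro r ⟨φ, hφ, rfl⟩
    exact le_trans (key_abs hφ ha hb lam)
      (le_csSup (nr_bddAbove _) ⟨φ, hφ, rfl⟩)
  · have h1 : {r : ℝ | ∃ φ : A →L[ℂ] ℂ, IsState A φ ∧
        r = ‖φ (a + (lam.re : ℂ) • b)‖} = ∅ := by
      ext r; simp only [Set.mem_setOf_eq, Set.mem_empty_iff_false, iff_false]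
      rintro ⟨φ, hφ, -⟩; exact hstate ⟨φ, hφ⟩
    have h2 : {r : ℝ | ∃ φ : A →L[ℂ] ℂ, IsState A φ ∧
        r = ‖φ (a + lam • b)‖} = ∅ := by
      ext r; simp only [Set.mem_setOf_eq, Set.mem_empty_iff_false, iff_false]
      rintro ⟨φ, hφ, -⟩; exact hstate ⟨φ, hφ⟩
    rw [nr, nr, h1, h2]

theorem stmt7 (a b : A) (ha : IsSelfAdjoint a) (hb : IsSelfAdjoint b) :
    nrOrth a b ↔ ∀ r : ℝ, nr a ≤ nr (a + (r : ℂ) • b) := by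
  constructor
  · intro h r; exact h r
  · intro h lam
    exact le_trans (h lam.re) (nr_re_le ha hb lam)
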